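/- Let P ⊆ ℝ² be finite with no three points collinear and let k ≥ 2 be an integer. Let ε* := min{ cost(Q,P) : Q ⊆ P, Q ≠ ∅, |Q| ≤ k }, and assume cost({q},P) > ε* for every q ∈ P. Then the optimal value is an edge weight of the graph G_P: there exist distinct a, b ∈ P such that ε* = w(a,b). -/

import Mathlib

open Set Metric

noncomputable abbrev Pt := EuclideanSpace ℝ (Fin 2)

/-- The planar determinant `det(u,v) = u₁·v₂ − u₂·v₁`. -/
def detv (u v : Pt) : ℝ := u 0 * v 1 - u 1 * v 0

/-- `cost Q P` is the maximum (as a supremum) over `p ∈ P` of the distance from `p`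
to the convex hull of `Q`. -/
noncomputable def cost (Q P : Set Pt) : ℝ :=
  sSup ((fun p => Metric.infDist p (convexHull ℝ Q)) '' P)

/-- `wgt P a b` : the maximum distance to the segment `[a, b]` among the points of `P`
lying in the closed halfplane to the left of the directed line from `a` to `b`. -/
noncomputable def wgt (P : Set Pt) (a b : Pt) : ℝ :=
  sSup ((fun q => Metric.infDist q (segment ℝ a b)) ''
    (P ∩ {x : Pt | 0 ≤ detv (b - a) (x - a)}))

open RealInnerProductSpace

theorem Set.Finite.exists_maximal_wrt {α β : Type*} [PartialOrder β] (f : α → β) (s : Set α)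
    (h : s.Finite) (hs : s.Nonempty) : ∃ a ∈ s, ∀ a' ∈ s, f a ≤ f a' → f a = f a' := by
  obtain ⟨a, ha, hm⟩ := Set.Finite.exists_maximalFor f s h hs
  exact ⟨a, ha, fun a' ha' hle => le_antisymm hle (hm ha' hle)⟩

theorem Set.Finite.exists_minimal_wrt {α β : Type*} [PartialOrder β] (f : α → β) (s : Set α)
    (h : s.Finite) (hs : s.Nonempty) : ∃ a ∈ s, ∀ a' ∈ s, f a' ≤ f a → f a = f a' := by
  obtain ⟨a, ha, hm⟩ := Set.Finite.exists_minimalFor f s h hs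
  exact ⟨a, ha, fun a' ha' hle => le_antisymm (hm ha' hle) hle⟩

lemma inner_expand (x y : Pt) : (inner ℝ x y : ℝ) = x 0 * y 0 + x 1 * y 1 := by
  simp [PiLp.inner_apply, Fin.sum_univ_two, RCLike.inner_apply]; ring

lemma norm_expand (x : Pt) : ‖x‖^2 = x 0^2 + x 1^2 := by
  rw [← real_inner_self_eq_norm_sq, inner_expand]; ring

lemma jacobi (u v w h : Pt) :
    detv u w * (inner ℝ v h : ℝ) = detv u v * (inner ℝ w h : ℝ) + detv v w * (inner ℝ u h : ℝ) := by
  simp only [detv, inner_expand]; ring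

lemma lagrange (p q : Pt) : detv p q ^ 2 + (inner ℝ p q : ℝ)^2 = ‖p‖^2 * ‖q‖^2 := by
  simp only [detv, inner_expand, norm_expand]; ring

lemma detv_smul_right (c : ℝ) (u v : Pt) : detv u (c • v) = c * detv u v := by
  simp only [detv, PiLp.smul_apply, smul_eq_mul]; ring

lemma detv_smul_left (c : ℝ) (u v : Pt) : detv (c • u) v = c * detv u v := by
  simp only [detv, PiLp.smul_apply, smul_eq_mul]; ring

lemma detv_sub_right (u v w : Pt) : detv u (v - w) = detv u v - detv u w := by
  simp only [detv, PiLp.sub_apply]; ring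

lemma detv_swap (u v : Pt) : detv u v = - detv v u := by simp only [detv]; ring

lemma pt_ext {u v : Pt} (h0 : u 0 = v 0) (h1 : u 1 = v 1) : u = v := by
  ext i; fin_cases i <;> assumption

lemma vec_dep {u v : Pt} (hu : u ≠ 0) (h : detv u v = 0) : ∃ r : ℝ, v = r • u := by
  have hu' : ¬ (u 0 = 0 ∧ u 1 = 0) := by
    rintro ⟨h0, h1⟩
    exact hu (pt_ext (by simpa using h0) (by simpa using h1))
  simp only [detv] at h
  by_cases h0 : u 0 = 0
  · have h1 : u 1 ≠ 0 := fun h1 => hu' ⟨h0, h1⟩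
    refine ⟨v 1 / u 1, pt_ext ?_ ?_⟩ <;>
      simp only [PiLp.smul_apply, smul_eq_mul] <;> field_simp <;> nlinarith [h, h0]
  · refine ⟨v 0 / u 0, pt_ext ?_ ?_⟩ <;>
      simp only [PiLp.smul_apply, smul_eq_mul] <;> field_simp <;> nlinarith [h]

lemma coll_of_detv {a b c : Pt} (h : detv (b - a) (c - a) = 0) :
    Collinear ℝ ({a, b, c} : Set Pt) := by
  rw [collinear_iff_exists_forall_eq_smul_vadd]
  by_cases hab : b = a
  · refine ⟨a, c - a, ?_⟩
    rintro p (rfl | rfl | rfl)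
    exacts [⟨0, by simp⟩, ⟨0, by simp [hab]⟩, ⟨1, by simp⟩]
  · obtain ⟨r, hr⟩ := vec_dep (fun hz => hab (by rwa [sub_eq_zero] at hz)) h
    refine ⟨a, b - a, ?_⟩
    rintro p (rfl | rfl | rfl)
    · exact ⟨0, by simp⟩
    · exact ⟨1, by simp⟩
    · exact ⟨r, by rw [← hr]; simp⟩



lemma tri_mem {p1 p2 p3 z : Pt}
    (hD : detv (p2 - p1) (p3 - p1) < 0)
    (h1 : detv (p2 - p1) (z - p1) ≤ 0)
    (h2 : detv (p3 - p2) (z - p2) ≤ 0)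
    (h3 : detv (p1 - p3) (z - p3) ≤ 0) :
    z ∈ convexHull ℝ ({p1, p2, p3} : Set Pt) := by
  set D : ℝ := -detv (p2 - p1) (p3 - p1) with hDdef
  have hDpos : 0 < D := by simp only [hDdef]; linarith
  set w : Fin 3 → ℝ := ![-detv (p3 - p2) (z - p2), -detv (p1 - p3) (z - p3),
    -detv (p2 - p1) (z - p1)] with hw
  set pts : Fin 3 → Pt := ![p1, p2, p3] with hpts
  have hw0 : ∀ i ∈ (Finset.univ : Finset (Fin 3)), 0 ≤ w i := by
    intro i _; fin_cases i <;> simp [hw] <;> linarith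
  have hsum : ∑ i, w i = D := by
    simp only [hw, Fin.sum_univ_three, hDdef, Matrix.cons_val_zero, Matrix.cons_val_one,
      Matrix.head_cons, Matrix.cons_val_two, Matrix.tail_cons]
    simp only [detv, PiLp.sub_apply]; ring
  have hsumpos : 0 < ∑ i, w i := by rw [hsum]; exact hDpos
  have hmem : ∀ i ∈ (Finset.univ : Finset (Fin 3)), pts i ∈ ({p1, p2, p3} : Set Pt) := by
    intro i _; fin_cases i <;> simp [hpts]
  have := Finset.centerMass_mem_convexHull (Finset.univ : Finset (Fin 3)) hw0 hsumpos hmem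
  have hceq : (Finset.univ : Finset (Fin 3)).centerMass w pts = z := by
    rw [Finset.centerMass, hsum]
    rw [inv_smul_eq_iff₀ (ne_of_gt hDpos)]
    apply pt_ext <;>
      simp only [Fin.sum_univ_three, hw, hpts, PiLp.add_apply, PiLp.smul_apply, smul_eq_mul,
        Matrix.cons_val_zero, Matrix.cons_val_one, Matrix.head_cons, Matrix.cons_val_two,
        Matrix.tail_cons, detv, PiLp.sub_apply, hDdef] <;> ring
  rwa [hceq] at this

lemma exists_max_rel {α : Type*} (r : α → α → Prop) :
    ∀ (n : ℕ) (s : Set α), s.Finite → s.ncard ≤ n → s.Nonempty →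
    (∀ a ∈ s, ∀ b ∈ s, a ≠ b → r a b ∨ r b a) →
    (∀ a ∈ s, ∀ b ∈ s, r a b → ¬ r b a) →
    (∀ a ∈ s, ∀ b ∈ s, ∀ c ∈ s, r a b → r b c → r a c) →
    ∃ m ∈ s, ∀ v ∈ s, v ≠ m → r v m := by
  intro n
  induction n with
  | zero =>
    intro s hfin hcard hne _ _ _
    exact absurd (Set.ncard_pos hfin |>.mpr hne) (by omega)
  | succ n ih =>
    intro s hfin hcard hne htot hasym htrans
    obtain ⟨a, ha⟩ := hne
    by_cases hs' : ({b ∈ s | r a b} : Set α).Nonempty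
    · set s' : Set α := {b ∈ s | r a b} with hs'def
      have hsub : s' ⊆ s := fun x hx => hx.1
      have hfin' : s'.Finite := hfin.subset hsub
      have hanotin : a ∉ s' := fun h => hasym a ha a ha h.2 h.2
      have hcard' : s'.ncard ≤ n := by
        have : s'.ncard < s.ncard := Set.ncard_lt_ncard ⟨hsub, fun h => hanotin (h ha)⟩ hfin
        omega
      obtain ⟨m, hm, hmax⟩ := ih s' hfin' hcard' hs'
        (fun x hx y hy => htot x (hsub hx) y (hsub hy))
        (fun x hx y hy => hasym x (hsub hx) y (hsub hy))
        (fun x hx y hy z hz => htrans x (hsub hx) y (hsub hy) z (hsub hz))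
      refine ⟨m, hsub hm, ?_⟩
      intro v hv hvm
      rcases htot v hv m (hsub hm) hvm with h | h
      · exact h
      · -- r m v; m ∈ s' so r a m; trans gives r a v, so v ∈ s', so r v m
        have hav : r a v := by
          by_cases hva : v = a
          · subst hva; exact absurd hm.2 (fun h2 => hasym v hv m (hsub hm) h2 h)
          · exact htrans a ha m (hsub hm) v hv hm.2 h
        exact hmax v ⟨hv, hav⟩ hvm
    · refine ⟨a, ha, ?_⟩
      intro v hv hva
      rcases htot v hv a ha hva with h | h
      · exact h
      · exact absurd ⟨hv, h⟩ (fun hmem => hs' ⟨v, hmem⟩)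


lemma face_lemma {X : Set Pt} (hX : X.Finite) (f : Pt →ₗ[ℝ] ℝ) (c : ℝ)
    (hf : ∀ v ∈ X, f v ≤ c) {z : Pt} (hz : z ∈ convexHull ℝ X) (hzc : f z = c) :
    z ∈ convexHull ℝ (X ∩ {y | f y = c}) := by
  rw [hX.convexHull_eq] at hz
  obtain ⟨w, hw0, hw1, hwz⟩ := hz
  -- f z = ∑ w y * f y
  have hfz : ∑ y ∈ hX.toFinset, w y * f y = c := by
    have := hwz
    rw [Finset.centerMass, hw1, inv_one, one_smul] at this
    rw [← hzc, ← this]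
    simp only [map_sum, map_smul, smul_eq_mul, id]
  have hkey : ∀ y ∈ hX.toFinset, w y * (c - f y) = 0 := by
    apply (Finset.sum_eq_zero_iff_of_nonneg ?_).mp
    · have : ∑ y ∈ hX.toFinset, w y * (c - f y) = c * ∑ y ∈ hX.toFinset, w y
          - ∑ y ∈ hX.toFinset, w y * f y := by
        rw [Finset.mul_sum, ← Finset.sum_sub_distrib]; congr 1; ext y; ring
      rw [this, hw1, hfz]; ring
    · intro y hy
      have := hw0 y (hX.mem_toFinset.mp hy)
      have := hf y (hX.mem_toFinset.mp hy)
      nlinarith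
  -- restrict to support
  set t := hX.toFinset.filter (fun y => w y ≠ 0) with ht
  have htsum : ∑ y ∈ t, w y = 1 := by
    rw [← hw1]; exact Finset.sum_filter_ne_zero _
  have hzt : t.centerMass w id = z := by
    rw [← hwz, Finset.centerMass, Finset.centerMass, htsum, hw1]
    congr 1
    apply Finset.sum_filter_of_ne
    intro y _ hy
    intro hwy; exact hy (by rw [hwy, zero_smul])
  rw [← hzt]
  apply Finset.centerMass_mem_convexHull
  · intro i hi; exact hw0 i (hX.mem_toFinset.mp (Finset.mem_filter.mp hi).1)
  · rw [htsum]; norm_num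
  · intro i hi
    obtain ⟨hiX, hiw⟩ := Finset.mem_filter.mp hi
    refine ⟨hX.mem_toFinset.mp hiX, ?_⟩
    have := hkey i hiX
    have hfi := hf i (hX.mem_toFinset.mp hiX)
    simp only [mem_setOf_eq, id]
    rcases mul_eq_zero.mp this with h | h
    · exact absurd h hiw
    · linarith

lemma trans_det {u v w h : Pt} (hu : (inner ℝ u h : ℝ) < 0) (hv : (inner ℝ v h : ℝ) < 0)
    (hw : (inner ℝ w h : ℝ) < 0) (huv : 0 < detv u v) (hvw : 0 < detv v w) :
    0 < detv u w := by
  have := jacobi u v w h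
  nlinarith

lemma tangent_r {X : Set Pt} (hX : X.Finite) (hne : X.Nonempty) {a h : Pt}
    (hh : ∀ v ∈ X, (inner ℝ (v - a) h : ℝ) < 0)
    (hgenX : ∀ v ∈ X, ∀ w ∈ X, v ≠ w → detv (v - a) (w - a) ≠ 0) :
    ∃ r ∈ X, ∀ v ∈ X, v ≠ r → detv (r - a) (v - a) < 0 := by
  have swap : ∀ p q : Pt, detv p q = - detv q p := by intro p q; simp [detv]; ring
  exact exists_max_rel (fun x y => detv (y - a) (x - a) < 0) X.ncard X hX le_rfl hne
    (fun x hx y hy hxy => by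
      rcases lt_or_gt_of_ne (hgenX x hx y hy hxy) with hlt | hgt
      · right; show detv (x - a) (y - a) < 0; linarith
      · left; show detv (y - a) (x - a) < 0; rw [swap]; linarith)
    (fun x hx y hy hr => by
      show ¬ detv (x - a) (y - a) < 0
      have hr' : detv (y - a) (x - a) < 0 := hr
      rw [swap] at hr'; intro h2; linarith)
    (fun x hx y hy z hz h1 h2 => by
      have h1' : detv (y - a) (x - a) < 0 := h1
      have h2' : detv (z - a) (y - a) < 0 := h2
      have hxy : 0 < detv (x - a) (y - a) := by rw [swap]; linarith
      have hyz : 0 < detv (y - a) (z - a) := by rw [swap]; linarith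
      have := trans_det (hh x hx) (hh y hy) (hh z hz) hxy hyz
      show detv (z - a) (x - a) < 0
      rw [swap]; linarith)

lemma tangent_l {X : Set Pt} (hX : X.Finite) (hne : X.Nonempty) {a h : Pt}
    (hh : ∀ v ∈ X, (inner ℝ (v - a) h : ℝ) < 0)
    (hgenX : ∀ v ∈ X, ∀ w ∈ X, v ≠ w → detv (v - a) (w - a) ≠ 0) :
    ∃ l ∈ X, ∀ v ∈ X, v ≠ l → 0 < detv (l - a) (v - a) := by
  have swap : ∀ p q : Pt, detv p q = - detv q p := by intro p q; simp [detv]; ring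
  exact exists_max_rel (fun x y => 0 < detv (y - a) (x - a)) X.ncard X hX le_rfl hne
    (fun x hx y hy hxy => by
      rcases lt_or_gt_of_ne (hgenX x hx y hy hxy) with hlt | hgt
      · left; show 0 < detv (y - a) (x - a); rw [swap]; linarith
      · right; show 0 < detv (x - a) (y - a); linarith)
    (fun x hx y hy hr => by
      show ¬ 0 < detv (x - a) (y - a)
      have hr' : 0 < detv (y - a) (x - a) := hr
      rw [swap] at hr'; intro h2; linarith)
    (fun x hx y hy z hz h1 h2 => by
      have hzy : 0 < detv (z - a) (y - a) := h2
      have hyx : 0 < detv (y - a) (x - a) := h1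
      have := trans_det (hh z hz) (hh y hy) (hh x hx) hzy hyx
      show 0 < detv (z - a) (x - a)
      exact this)

lemma detv_frame {e : Pt} (he : ‖e‖ = 1) (p r : Pt) :
    detv p r = detv e r * (inner ℝ p e : ℝ) - detv e p * (inner ℝ r e : ℝ) := by
  have h := jacobi p e r e
  have h2 : (inner ℝ e e : ℝ) = 1 := by
    rw [real_inner_self_eq_norm_sq, he]; norm_num
  have h3 : detv p e = - detv e p := by simp only [detv]; ring
  rw [h2] at h; rw [h3] at h; linarith

lemma sq_le_of_le {a b : ℝ} (ha : 0 ≤ a) (hb : 0 ≤ b) (h : a^2 ≤ b^2) : a ≤ b := by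
  nlinarith

lemma arith_t {ε t ny d s sy : ℝ} (hd0 : 0 ≤ d) (hdε : d ≤ ε)
    (hsq : d^2 = (s - sy)^2 + (t - ny)^2) (ht0 : 0 ≤ t) (hny : ny ≤ 0) : t ≤ ε := by
  nlinarith [sq_nonneg (s - sy), mul_nonneg ht0 (neg_nonneg.mpr hny)]

lemma arith_side {ε s t sy ny d : ℝ} (hd0 : 0 ≤ d) (hdε : d ≤ ε)
    (hsq : d^2 = (s - sy)^2 + (t - ny)^2) (hny : ny ≤ 0) (ht : 0 ≤ t)
    (h1 : ε^2 < s^2 + t^2) (hs : s < 0) : sy < 0 := by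
  by_contra hc
  push_neg at hc
  nlinarith [mul_nonneg ht (neg_nonneg.mpr hny), mul_nonneg (neg_nonneg.mpr (le_of_lt hs)) hc]

lemma arith_D_left {ℓ s t sc nc : ℝ} (hl : 0 < ℓ) (hs : s < 0) (ht : 0 ≤ t)
    (hsc : sc < 0) (hnc : nc < 0) : (nc - t) * (ℓ - s) - (0 - t) * (sc - s) < 0 := by
  nlinarith [mul_nonneg ht (le_of_lt hl), mul_pos (sub_pos.mpr (lt_trans hs hl)) (neg_pos.mpr hnc),
    mul_nonneg ht (neg_nonneg.mpr (le_of_lt hsc))]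

lemma arith_c1 {ℓ s t : ℝ} (hl : 0 < ℓ) (ht : 0 ≤ t) :
    (0 - t) * (ℓ - s) - (0 - t) * (0 - s) ≤ 0 := by nlinarith [mul_nonneg ht (le_of_lt hl)]

lemma arith_c2_left {ℓ sc nc : ℝ} (hl : 0 < ℓ) (hnc : nc ≤ 0) :
    (0 - 0) * (sc - ℓ) - (nc - 0) * (0 - ℓ) ≤ 0 := by nlinarith

lemma arith_c3_left {s t sc nc : ℝ} (hs : s < 0) (ht : 0 ≤ t) (hsc : sc < 0) (hnc : nc ≤ 0) :
    (0 - nc) * (s - sc) - (t - nc) * (0 - sc) ≤ 0 := by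
  nlinarith [mul_nonneg ht (neg_nonneg.mpr (le_of_lt hsc)),
    mul_nonneg (neg_nonneg.mpr (le_of_lt hs)) (neg_nonneg.mpr hnc)]

lemma arith_D_right {ℓ s t sc nc : ℝ} (hl : 0 < ℓ) (hs : ℓ < s) (ht : 0 ≤ t)
    (hsc : ℓ < sc) (hnc : nc < 0) : (nc - 0) * (s - 0) - (t - 0) * (sc - 0) < 0 := by
  nlinarith [mul_pos (lt_trans hl hs) (neg_pos.mpr hnc), mul_nonneg ht (le_of_lt (lt_trans hl hsc))]

lemma arith_c1_right {ℓ s t : ℝ} (hl : 0 < ℓ) (ht : 0 ≤ t) :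
    (0 - 0) * (s - 0) - (t - 0) * (ℓ - 0) ≤ 0 := by nlinarith

lemma arith_c2_right {ℓ s t sc nc : ℝ} (hs : ℓ < s) (ht : 0 ≤ t) (hsc : ℓ < sc) (hnc : nc ≤ 0) :
    (0 - t) * (sc - s) - (nc - t) * (ℓ - s) ≤ 0 := by
  nlinarith [mul_nonneg ht (le_of_lt (sub_pos.mpr hsc)),
    mul_nonneg (neg_nonneg.mpr hnc) (le_of_lt (sub_pos.mpr hs))]

lemma arith_c3_right {ℓ sc nc : ℝ} (hl : 0 < ℓ) (hnc : nc ≤ 0) :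
    (0 - nc) * (0 - sc) - (0 - nc) * (ℓ - sc) ≤ 0 := by nlinarith

set_option maxHeartbeats 1000000 in
lemma core_lemma
    (P : Set Pt) (hPfin : P.Finite)
    (hgen : ∀ x ∈ P, ∀ y ∈ P, ∀ z ∈ P, x ≠ y → x ≠ z → y ≠ z →
      ¬ Collinear ℝ ({x, y, z} : Set Pt))
    (ε : ℝ) (hε0 : 0 ≤ ε)
    (Qs : Set Pt) (hQsP : Qs ⊆ P) (hQsne : Qs.Nonempty)
    (hcostQs : ∀ p ∈ P, Metric.infDist p (convexHull ℝ Qs) ≤ ε)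
    (exch : ∀ q ∈ P, q ∉ convexHull ℝ Qs → ∀ v ∈ Qs,
      v ∈ convexHull ℝ (insert q (Qs \ {v})) → False)
    (A B : Pt) (hA : A ∈ Qs) (hB : B ∈ Qs) (hAB : A ≠ B)
    (H1 : ∀ v ∈ Qs, detv (B - A) (v - A) ≤ 0)
    (q : Pt) (hq : q ∈ P) (hqdet : 0 ≤ detv (B - A) (q - A)) :
    Metric.infDist q (segment ℝ A B) ≤ ε := by
  classical
  by_contra hbad'
  push_neg at hbad'
  have hbad : ε < Metric.infDist q (segment ℝ A B) := hbad'
  set K := convexHull ℝ Qs with hK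
  have hQsfin : Qs.Finite := hPfin.subset hQsP
  have hKco : IsCompact K := hQsfin.isCompact_convexHull ℝ
  have hKne : K.Nonempty := hQsne.mono (subset_convexHull ℝ Qs)
  have hdh : ∀ z ∈ segment ℝ A B, ε < dist q z := fun z hz =>
    lt_of_lt_of_le hbad (Metric.infDist_le_dist_of_mem hz)
  have hBA0 : B - A ≠ 0 := sub_ne_zero.mpr (Ne.symm hAB)
  set ℓ : ℝ := ‖B - A‖ with hldef
  have hl : 0 < ℓ := norm_pos_iff.mpr hBA0
  set e : Pt := ℓ⁻¹ • (B - A) with hedef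
  have he : ‖e‖ = 1 := by
    rw [hedef, norm_smul, norm_inv, norm_norm, ← hldef, inv_mul_cancel₀ (ne_of_gt hl)]
  have hBAe : B - A = ℓ • e := by
    rw [hedef, smul_smul, mul_inv_cancel₀ (ne_of_gt hl), one_smul]
  set ξ : Pt → ℝ := fun z => (inner ℝ (z - A) e : ℝ) with hxidef
  set ν : Pt → ℝ := fun z => detv e (z - A) with hnudef
  have hee : (inner ℝ e e : ℝ) = 1 := by
    rw [real_inner_self_eq_norm_sq, he]; norm_num
  have hξA : ξ A = 0 := by simp [hxidef]
  have hνA : ν A = 0 := by simp [hnudef, detv]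
  have hξB : ξ B = ℓ := by
    simp only [hxidef]
    rw [hBAe, real_inner_smul_left, hee, mul_one]
  have hνB : ν B = 0 := by
    simp only [hnudef]
    rw [hBAe, detv_smul_right]
    simp only [detv]; ring
  have hνdet : ∀ z : Pt, detv (B - A) (z - A) = ℓ * ν z := by
    intro z; rw [hBAe, detv_smul_left]
  have hνdiff : ∀ z w : Pt, detv e (z - w) = ν z - ν w := by
    intro z w
    have hzw : z - w = (z - A) - (w - A) := by abel
    rw [hzw, detv_sub_right]
  have hξdiff : ∀ z w : Pt, (inner ℝ (z - w) e : ℝ) = ξ z - ξ w := by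
    intro z w
    have hzw : z - w = (z - A) - (w - A) := by abel
    rw [hzw, inner_sub_left]
  have hdist : ∀ z w : Pt, (dist z w)^2 = (ξ z - ξ w)^2 + (ν z - ν w)^2 := by
    intro z w
    have h := lagrange e (z - w)
    rw [he] at h
    rw [hνdiff z w] at h
    rw [real_inner_comm, hξdiff z w] at h
    rw [dist_eq_norm]
    nlinarith [h]
  have hDD : ∀ z w z' : Pt,
      detv (z - w) (z' - w) = (ν z' - ν w) * (ξ z - ξ w) - (ν z - ν w) * (ξ z' - ξ w) := by
    intro z w z'
    rw [detv_frame he (z - w) (z' - w), hνdiff, hνdiff, hξdiff, hξdiff]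
  have hlin1 : IsLinearMap ℝ (fun z : Pt => detv e z) :=
    ⟨fun x y => by simp only [detv, PiLp.add_apply]; ring,
     fun c x => by simp only [detv, PiLp.smul_apply, smul_eq_mul]; ring⟩
  have hlin2 : IsLinearMap ℝ (fun z : Pt => (inner ℝ z e : ℝ)) :=
    ⟨fun x y => inner_add_left x y e, fun c x => real_inner_smul_left x e c⟩
  have hνQ : ∀ v ∈ Qs, ν v ≤ 0 := by
    intro v hv
    have h := H1 v hv
    rw [hνdet v] at h
    nlinarith
  have hKν : ∀ y ∈ K, ν y ≤ 0 := by
    have hconv : Convex ℝ {z : Pt | ν z ≤ 0} := by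
      have hset : {z : Pt | ν z ≤ 0} = {z : Pt | detv e z ≤ detv e A} := by
        ext z
        simp only [mem_setOf_eq, hnudef, detv_sub_right]
        constructor <;> intro <;> linarith
      rw [hset]
      exact convex_halfSpace_le hlin1 _
    intro y hy
    exact convexHull_min hνQ hconv hy
  have hKξle : ∀ (c0 : ℝ), (∀ v ∈ Qs, ξ v ≤ c0) → ∀ y ∈ K, ξ y ≤ c0 := by
    intro c0 hc0
    have hconv : Convex ℝ {z : Pt | ξ z ≤ c0} := by
      have hset : {z : Pt | ξ z ≤ c0} = {z : Pt | (inner ℝ z e : ℝ) ≤ c0 + (inner ℝ A e : ℝ)} := by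
        ext z
        simp only [mem_setOf_eq, hxidef, inner_sub_left]
        constructor <;> intro <;> linarith
      rw [hset]
      exact convex_halfSpace_le hlin2 _
    intro y hy
    exact convexHull_min hc0 hconv hy
  have hKξge : ∀ (c0 : ℝ), (∀ v ∈ Qs, c0 ≤ ξ v) → ∀ y ∈ K, c0 ≤ ξ y := by
    intro c0 hc0
    have hconv : Convex ℝ {z : Pt | c0 ≤ ξ z} := by
      have hset : {z : Pt | c0 ≤ ξ z} = {z : Pt | c0 + (inner ℝ A e : ℝ) ≤ (inner ℝ z e : ℝ)} := by
        ext z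
        simp only [mem_setOf_eq, hxidef, inner_sub_left]
        constructor <;> intro <;> linarith
      rw [hset]
      exact convex_halfSpace_ge hlin2 _
    intro y hy
    exact convexHull_min hc0 hconv hy
  obtain ⟨y, hyK, hyd⟩ := hKco.exists_infDist_eq_dist hKne q
  have hqy : dist q y ≤ ε := by rw [← hyd]; exact hcostQs q hq
  set s : ℝ := ξ q with hsdef
  set t : ℝ := ν q with htdef
  have ht0 : 0 ≤ t := by
    have h := hqdet
    rw [hνdet q] at h
    nlinarith
  have hyν : ν y ≤ 0 := hKν y hyK
  have hdqy := hdist q y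
  have htν : 0 ≤ t * (- ν y) := mul_nonneg ht0 (by linarith)
  have htε : t ≤ ε := arith_t (dist_nonneg (x := q) (y := y)) hqy hdqy ht0 hyν
  have hqseg : q ∉ segment ℝ A B := by
    intro hmem
    have h := hdh q hmem
    rw [dist_self] at h
    linarith
  have hqK : q ∉ K := by
    intro hqK
    have ht0' : t = 0 := le_antisymm (hKν q hqK) ht0
    set f : Pt →ₗ[ℝ] ℝ := IsLinearMap.mk' _ hlin1 with hfdef
    have hface := face_lemma hQsfin f (detv e A)
      (fun v hv => by
        have h := hνQ v hv
        simp only [hnudef, detv_sub_right] at h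
        simp only [hfdef, IsLinearMap.mk'_apply]
        linarith)
      (z := q) (by rw [← hK]; exact hqK)
      (by
        have h : ν q = 0 := ht0'
        simp only [hnudef, detv_sub_right] at h
        simp only [hfdef, IsLinearMap.mk'_apply]
        linarith)
    have hsub : Qs ∩ {y | f y = detv e A} ⊆ {A, B} := by
      rintro v ⟨hvQ, hvf⟩
      have hvf' : detv e v = detv e A := hvf
      have hνv : ν v = 0 := by
        simp only [hnudef, detv_sub_right]
        linarith
      have hdet0 : detv (B - A) (v - A) = 0 := by rw [hνdet v, hνv, mul_zero]
      by_contra hvAB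
      simp only [mem_insert_iff, mem_singleton_iff] at hvAB
      push_neg at hvAB
      exact hgen A (hQsP hA) B (hQsP hB) v (hQsP hvQ) hAB (Ne.symm hvAB.1) (Ne.symm hvAB.2)
        (coll_of_detv hdet0)
    have hq2 : q ∈ convexHull ℝ ({A, B} : Set Pt) := convexHull_mono hsub hface
    rw [convexHull_pair] at hq2
    exact hqseg hq2
  have hcase : s < 0 ∨ ℓ < s := by
    by_contra hc
    push_neg at hc
    obtain ⟨hs0, hsl⟩ := hc
    set z : Pt := A + (s / ℓ) • (B - A) with hzdef
    have hzseg : z ∈ segment ℝ A B := by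
      rw [segment_eq_image']
      exact ⟨s / ℓ, ⟨div_nonneg hs0 (le_of_lt hl), (div_le_one hl).mpr hsl⟩, rfl⟩
    have hzA : z - A = s • e := by
      rw [hzdef, hBAe]
      rw [add_sub_cancel_left, smul_smul, div_mul_cancel₀ _ (ne_of_gt hl)]
    have hξz : ξ z = s := by
      simp only [hxidef]
      rw [hzA, real_inner_smul_left, hee, mul_one]
    have hνz : ν z = 0 := by
      simp only [hnudef]
      rw [hzA, detv_smul_right]
      simp only [detv]; ring
    have hd := hdist q z
    rw [hξz, hνz] at hd
    have hle : dist q z ≤ ε := by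
      apply sq_le_of_le dist_nonneg hε0
      rw [hd]
      nlinarith [htε, ht0]
    exact absurd (hdh z hzseg) (not_lt.mpr hle)
  rcases hcase with hsL | hsR
  · -- LEFT case : s < 0, swallow A
    have hqA : ε < dist q A := hdh A (left_mem_segment ℝ A B)
    have hdqA := hdist q A
    rw [hξA, hνA] at hdqA
    have h1 : ε^2 < s^2 + t^2 := by
      nlinarith [hqA, dist_nonneg (x := q) (y := A), hε0]
    have hyξ : ξ y < 0 :=
      arith_side (dist_nonneg (x := q) (y := y)) hqy hdqy hyν ht0 h1 hsL
    obtain ⟨c, hcQ, hcmin'⟩ := hQsfin.exists_minimal_wrt ξ Qs hQsne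
    have hcmin : ∀ v ∈ Qs, ξ c ≤ ξ v := by
      intro v hv
      rcases le_total (ξ c) (ξ v) with h | h
      · exact h
      · exact le_of_eq (hcmin' v hv h)
    have hξc : ξ c < 0 := lt_of_le_of_lt (hKξge (ξ c) hcmin y hyK) hyξ
    have hcA : c ≠ A := fun h => by rw [h, hξA] at hξc; exact lt_irrefl 0 hξc
    have hcB : c ≠ B := fun h => by
      rw [h, hξB] at hξc; exact absurd hξc (not_lt.mpr (le_of_lt hl))
    have hνc0 : ν c ≤ 0 := hνQ c hcQ
    have hνc : ν c < 0 := by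
      rcases lt_or_eq_of_le hνc0 with h | h
      · exact h
      · exfalso
        have hdet0 : detv (B - A) (c - A) = 0 := by rw [hνdet c, h, mul_zero]
        exact hgen A (hQsP hA) B (hQsP hB) c (hQsP hcQ) hAB (Ne.symm hcA) (Ne.symm hcB)
          (coll_of_detv hdet0)
    have hD : detv (B - q) (c - q) < 0 := by
      rw [hDD, hνB, hξB]
      exact arith_D_left hl hsL ht0 hξc hνc
    have hc1 : detv (B - q) (A - q) ≤ 0 := by
      rw [hDD, hξA, hνA, hνB, hξB]
      exact arith_c1 hl ht0
    have hc2 : detv (c - B) (A - B) ≤ 0 := by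
      rw [hDD, hξA, hνA, hνB, hξB]
      exact arith_c2_left hl hνc0
    have hc3 : detv (q - c) (A - c) ≤ 0 := by
      rw [hDD, hξA, hνA]
      exact arith_c3_left hsL ht0 hξc hνc0
    have hAmem : A ∈ convexHull ℝ ({q, B, c} : Set Pt) := tri_mem hD hc1 hc2 hc3
    have hsub2 : ({q, B, c} : Set Pt) ⊆ insert q (Qs \ {A}) := by
      rintro v (rfl | rfl | rfl)
      · exact mem_insert _ _
      · exact mem_insert_of_mem _ ⟨hB, Ne.symm hAB⟩
      · exact mem_insert_of_mem _ ⟨hcQ, hcA⟩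
    exact exch q hq hqK A hA (convexHull_mono hsub2 hAmem)
  · -- RIGHT case : ℓ < s, swallow B
    have hqB : ε < dist q B := hdh B (right_mem_segment ℝ A B)
    have hdqB := hdist q B
    rw [hξB, hνB] at hdqB
    have h1 : ε^2 < (s - ℓ)^2 + t^2 := by
      nlinarith [hqB, dist_nonneg (x := q) (y := B), hε0]
    have hyξ : ℓ < ξ y := by
      have h2 : dist q y ^2 = ((ℓ - s) - (ℓ - ξ y))^2 + (t - ν y)^2 := by
        rw [hdqy]; ring
      have h3 : ε^2 < (ℓ - s)^2 + t^2 := by nlinarith [h1]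
      have := arith_side (dist_nonneg (x := q) (y := y)) hqy h2 hyν ht0 h3 (by linarith)
      linarith
    obtain ⟨c, hcQ, hcmax'⟩ := hQsfin.exists_maximal_wrt ξ Qs hQsne
    have hcmax : ∀ v ∈ Qs, ξ v ≤ ξ c := by
      intro v hv
      rcases le_total (ξ v) (ξ c) with h | h
      · exact h
      · exact le_of_eq (hcmax' v hv h).symm
    have hξc : ℓ < ξ c := lt_of_lt_of_le hyξ (hKξle (ξ c) hcmax y hyK)
    have hcA : c ≠ A := fun h => by
      rw [h, hξA] at hξc; exact absurd hξc (not_lt.mpr (le_of_lt hl))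
    have hcB : c ≠ B := fun h => by rw [h, hξB] at hξc; exact lt_irrefl ℓ hξc
    have hνc0 : ν c ≤ 0 := hνQ c hcQ
    have hνc : ν c < 0 := by
      rcases lt_or_eq_of_le hνc0 with h | h
      · exact h
      · exfalso
        have hdet0 : detv (B - A) (c - A) = 0 := by rw [hνdet c, h, mul_zero]
        exact hgen A (hQsP hA) B (hQsP hB) c (hQsP hcQ) hAB (Ne.symm hcA) (Ne.symm hcB)
          (coll_of_detv hdet0)
    have hD : detv (q - A) (c - A) < 0 := by
      rw [hDD, hξA, hνA]
      exact arith_D_right hl hsR ht0 hξc hνc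
    have hc1 : detv (q - A) (B - A) ≤ 0 := by
      rw [hDD, hξA, hνA, hνB, hξB]
      exact arith_c1_right hl ht0
    have hc2 : detv (c - q) (B - q) ≤ 0 := by
      rw [hDD, hνB, hξB]
      exact arith_c2_right hsR ht0 hξc hνc0
    have hc3 : detv (A - c) (B - c) ≤ 0 := by
      rw [hDD, hξA, hνA, hνB, hξB]
      exact arith_c3_right hl hνc0
    have hBmem : B ∈ convexHull ℝ ({A, q, c} : Set Pt) := tri_mem hD hc1 hc2 hc3
    have hsub2 : ({A, q, c} : Set Pt) ⊆ insert q (Qs \ {B}) := by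
      rintro v (rfl | rfl | rfl)
      · exact mem_insert_of_mem _ ⟨hA, hAB⟩
      · exact mem_insert _ _
      · exact mem_insert_of_mem _ ⟨hcQ, hcB⟩
    exact exch q hq hqK B hB (convexHull_mono hsub2 hBmem)

lemma detv_self (p : Pt) : detv p p = 0 := by simp only [detv]; ring

lemma detv_zero_right (p : Pt) : detv p 0 = 0 := by simp [detv]

lemma detv_add_right (u v w : Pt) : detv u (v + w) = detv u v + detv u w := by
  simp only [detv, PiLp.add_apply]; ring

set_option maxHeartbeats 1600000 in
theorem stmt_12 (P : Set Pt) (hPfin : P.Finite) (hPne : P.Nonempty)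
    (hgen : ∀ x ∈ P, ∀ y ∈ P, ∀ z ∈ P, x ≠ y → x ≠ z → y ≠ z →
      ¬ Collinear ℝ ({x, y, z} : Set Pt))
    (k : ℕ) (hk : 2 ≤ k)
    (hone : ∀ q ∈ P,
      sInf { c : ℝ | ∃ Q : Set Pt, Q ⊆ P ∧ Q.Nonempty ∧ Q.ncard ≤ k ∧
        c = cost Q P } < cost {q} P) :
    ∃ a ∈ P, ∃ b ∈ P, a ≠ b ∧
      sInf { c : ℝ | ∃ Q : Set Pt, Q ⊆ P ∧ Q.Nonempty ∧ Q.ncard ≤ k ∧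
        c = cost Q P } = wgt P a b := by
  classical
  set S := { c : ℝ | ∃ Q : Set Pt, Q ⊆ P ∧ Q.Nonempty ∧ Q.ncard ≤ k ∧ c = cost Q P } with hSdef
  have hSsub : S ⊆ (fun Q => cost Q P) '' {Q : Set Pt | Q ⊆ P} := by
    rintro c ⟨Q, h1, _, _, rfl⟩
    exact ⟨Q, h1, rfl⟩
  have hSfin : S.Finite := Set.Finite.subset (Set.Finite.image _ hPfin.finite_subsets) hSsub
  obtain ⟨q₀, hq₀⟩ := hPne
  have hq0S : cost {q₀} P ∈ S :=
    ⟨{q₀}, by simp [hq₀], ⟨q₀, rfl⟩, by simp [Set.ncard_singleton]; omega, rfl⟩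
  have hSne : S.Nonempty := ⟨_, hq0S⟩
  have hεS : sInf S ∈ S := hSne.csInf_mem hSfin
  have hεlb : ∀ c ∈ S, sInf S ≤ c := fun c hc => csInf_le hSfin.bddBelow hc
  set ε := sInf S with hεdef
  have hPne' : P.Nonempty := ⟨q₀, hq₀⟩
  have hcost_bound : ∀ (Q : Set Pt), ∀ p ∈ P, Metric.infDist p (convexHull ℝ Q) ≤ cost Q P :=
    fun Q p hp => le_csSup ((hPfin.image _).bddAbove) (mem_image_of_mem _ hp)
  have hcost_attain : ∀ Q : Set Pt, ∃ p ∈ P, cost Q P = Metric.infDist p (convexHull ℝ Q) := by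
    intro Q
    have h1 := (hPne'.image (fun p => Metric.infDist p (convexHull ℝ Q))).csSup_mem
      (hPfin.image (fun p => Metric.infDist p (convexHull ℝ Q)))
    obtain ⟨p, hp, he⟩ := h1
    exact ⟨p, hp, by rw [cost, ← he]⟩
  have hε0 : 0 ≤ ε := by
    obtain ⟨Q, _, _, _, hceq⟩ := hεS
    rw [hceq]
    exact le_trans Metric.infDist_nonneg (hcost_bound Q q₀ hq₀)
  -- final assembly helper
  have hfinal : ∀ A ∈ P, ∀ B ∈ P, A ≠ B →
      (∀ q ∈ P, 0 ≤ detv (B - A) (q - A) → Metric.infDist q (segment ℝ A B) ≤ ε) →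
      (∃ p ∈ P, 0 ≤ detv (B - A) (p - A) ∧ Metric.infDist p (segment ℝ A B) = ε) →
      ε = wgt P A B := by
    rintro A hAP B hBP hAB hub ⟨p, hpP, hpd, hpe⟩
    rw [wgt]
    apply le_antisymm
    · exact le_csSup (((hPfin.inter_of_left _).image _).bddAbove) ⟨p, ⟨hpP, hpd⟩, hpe⟩
    · refine csSup_le ⟨Metric.infDist p (segment ℝ A B),
        mem_image_of_mem _ (⟨hpP, hpd⟩ : p ∈ P ∩ {x : Pt | 0 ≤ detv (B - A) (x - A)})⟩ ?_
      rintro c ⟨q, ⟨hqP, hqd⟩, rfl⟩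
      exact hub q hqP hqd
  by_cases hz : ε = 0
  · -- zero case : hull edge of P
    have h1 := hone q₀ hq₀
    obtain ⟨p₁, hp₁, hc1⟩ := hcost_attain {q₀}
    rw [hc1, convexHull_singleton, Metric.infDist_singleton] at h1
    obtain ⟨a, haP, hamax'⟩ := hPfin.exists_maximal_wrt (fun v => dist v q₀) P hPne'
    have hamax : ∀ v ∈ P, dist v q₀ ≤ dist a q₀ := by
      intro v hv
      rcases le_total (dist v q₀) (dist a q₀) with h | h
      · exact h
      · exact le_of_eq (hamax' v hv h).symm
    have haq₀ : a ≠ q₀ := by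
      intro h
      rw [h] at hamax
      have := lt_of_lt_of_le h1 (hamax p₁ hp₁)
      rw [dist_self] at this
      rw [hz] at this
      exact lt_irrefl 0 this
    have hexp : ∀ v ∈ P, v ≠ a → (inner ℝ (v - a) (a - q₀) : ℝ) < 0 := by
      intro v hv hva
      by_contra hcon
      push_neg at hcon
      have hvq : v - q₀ = (v - a) + (a - q₀) := by abel
      have hnorm : ‖v - q₀‖^2 = ‖v - a‖^2 + 2 * (inner ℝ (v - a) (a - q₀) : ℝ) + ‖a - q₀‖^2 := by
        rw [hvq, ← real_inner_self_eq_norm_sq, ← real_inner_self_eq_norm_sq,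
          ← real_inner_self_eq_norm_sq, real_inner_add_add_self]
      have hva' : 0 < ‖v - a‖ := norm_pos_iff.mpr (sub_ne_zero.mpr hva)
      have hd := hamax v hv
      rw [dist_eq_norm, dist_eq_norm] at hd
      nlinarith [norm_nonneg (v - q₀), norm_nonneg (a - q₀)]
    set X := P \ {a} with hXdef
    have hXfin : X.Finite := hPfin.subset diff_subset
    have hXne : X.Nonempty := ⟨q₀, hq₀, Ne.symm haq₀⟩
    have hhh : ∀ v ∈ X, (inner ℝ (v - a) (a - q₀) : ℝ) < 0 := fun v hv => hexp v hv.1 hv.2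
    have hgenX : ∀ v ∈ X, ∀ w ∈ X, v ≠ w → detv (v - a) (w - a) ≠ 0 := by
      intro v hv w hw hvw hdet
      exact hgen a haP v (hv.1) w (hw.1) (Ne.symm hv.2) (Ne.symm hw.2) hvw (coll_of_detv hdet)
    obtain ⟨r, hrX, hr⟩ := tangent_r hXfin hXne hhh hgenX
    refine ⟨a, haP, r, hrX.1, Ne.symm hrX.2, ?_⟩
    apply hfinal a haP r hrX.1 (Ne.symm hrX.2)
    · intro q hqP hqd
      rcases eq_or_ne q a with rfl | hqa
      · rw [Metric.infDist_zero_of_mem (left_mem_segment ℝ _ _)]; exact hε0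
      rcases eq_or_ne q r with rfl | hqr
      · rw [Metric.infDist_zero_of_mem (right_mem_segment ℝ _ _)]; exact hε0
      · exfalso
        have := hr q ⟨hqP, hqa⟩ hqr
        linarith
    · refine ⟨a, haP, ?_, ?_⟩
      · simp [detv_zero_right]
      · rw [Metric.infDist_zero_of_mem (left_mem_segment ℝ _ _), hz]
  · -- main case
    have hεpos : 0 < ε := lt_of_le_of_ne hε0 (Ne.symm hz)
    set F := {Q : Set Pt | Q ⊆ P ∧ Q.Nonempty ∧ Q.ncard ≤ k ∧ cost Q P = ε} with hFdef
    have hFfin : F.Finite := hPfin.finite_subsets.subset (fun Q hQ => hQ.1)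
    have hFne : F.Nonempty := by
      obtain ⟨Q₀, h1, h2, h3, hc⟩ := hεS
      exact ⟨Q₀, h1, h2, h3, hc.symm⟩
    obtain ⟨Qs, hQsF, hQsmax⟩ :=
      hFfin.exists_maximal_wrt (fun Q => (P ∩ convexHull ℝ Q).ncard) F hFne
    obtain ⟨hQsP, hQsne, hQsk, hQscost⟩ := hQsF
    have hQsfin : Qs.Finite := hPfin.subset hQsP
    set K := convexHull ℝ Qs with hKdef
    have hKco : IsCompact K := hQsfin.isCompact_convexHull ℝ
    have hKne : K.Nonempty := hQsne.mono (subset_convexHull ℝ Qs)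
    have hcostQs : ∀ p ∈ P, Metric.infDist p K ≤ ε := by
      intro p hp
      rw [← hQscost]
      exact hcost_bound Qs p hp
    have exch : ∀ q ∈ P, q ∉ K → ∀ v ∈ Qs,
        v ∈ convexHull ℝ (insert q (Qs \ {v})) → False := by
      intro q hqP hqK v hv hsw
      set Q' := insert q (Qs \ {v}) with hQ'def
      have hQ'P : Q' ⊆ P := insert_subset hqP (fun w hw => hQsP hw.1)
      have hQ'ne : Q'.Nonempty := insert_nonempty _ _
      have hsub : K ⊆ convexHull ℝ Q' := by
        apply convexHull_min _ (convex_convexHull ℝ Q')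
        intro w hw
        by_cases hwv : w = v
        · rw [hwv]; exact hsw
        · exact subset_convexHull _ _ (mem_insert_of_mem _ ⟨hw, hwv⟩)
      have hcard : Q'.ncard ≤ k := by
        have h1 : (Qs \ {v}).ncard = Qs.ncard - 1 := Set.ncard_diff_singleton_of_mem hv
        have h2 : Q'.ncard ≤ (Qs \ {v}).ncard + 1 := Set.ncard_insert_le _ _
        have h3 : 0 < Qs.ncard := (Set.ncard_pos hQsfin).mpr hQsne
        omega
      have hcost' : cost Q' P ≤ ε := by
        apply csSup_le (hPne'.image _)
        rintro c ⟨p, hp, rfl⟩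
        exact le_trans (Metric.infDist_le_infDist_of_subset hsub hKne) (hcostQs p hp)
      have hcost'' : cost Q' P = ε :=
        le_antisymm hcost' (hεlb _ ⟨Q', hQ'P, hQ'ne, hcard, rfl⟩)
      have hQ'F : Q' ∈ F := ⟨hQ'P, hQ'ne, hcard, hcost''⟩
      have hφlt : (P ∩ K).ncard < (P ∩ convexHull ℝ Q').ncard := by
        apply Set.ncard_lt_ncard _ (hPfin.inter_of_left _)
        constructor
        · rintro w ⟨hw1, hw2⟩; exact ⟨hw1, hsub hw2⟩
        · intro hcon
          have hqmem : q ∈ P ∩ convexHull ℝ Q' :=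
            ⟨hqP, subset_convexHull _ _ (mem_insert _ _)⟩
          exact hqK (hcon hqmem).2
      exact absurd (hQsmax Q' hQ'F (le_of_lt hφlt)) (ne_of_lt hφlt)
    -- two distinct points of Qs
    have hQs2 : ∃ A₀ ∈ Qs, ∃ B₀ ∈ Qs, A₀ ≠ B₀ := by
      by_contra hcon
      push_neg at hcon
      obtain ⟨v, hv⟩ := hQsne
      have hQsv : Qs = {v} := by
        apply subset_antisymm
        · intro w hw; exact hcon w hw v hv
        · intro w hw; rw [hw]; exact hv
      have h2 := hone v (hQsP hv)
      rw [← hQsv, hQscost] at h2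
      exact lt_irrefl _ h2
    -- farthest point
    obtain ⟨pstar, hpP, hpc⟩ := hcost_attain Qs
    have hpd : Metric.infDist pstar K = ε := by rw [← hKdef] at hpc; rw [← hpc, hQscost]
    obtain ⟨x, hxK, hxd⟩ := hKco.exists_infDist_eq_dist hKne pstar
    have hdx : dist pstar x = ε := by rw [← hxd, hpd]
    set u := pstar - x with hudef
    have hu : ‖u‖ = ε := by rw [hudef, ← dist_eq_norm]; exact hdx
    have huu : (inner ℝ u u : ℝ) = ε^2 := by rw [real_inner_self_eq_norm_sq, hu]
    have hproj : ∀ w ∈ K, (inner ℝ u (w - x) : ℝ) ≤ 0 := by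
      intro w hwK
      by_contra hcon
      push_neg at hcon
      have hwx : w ≠ x := by
        intro h; rw [h, sub_self] at hcon; simp at hcon
      have hM : 0 < ‖w - x‖^2 := pow_pos (norm_pos_iff.mpr (sub_ne_zero.mpr hwx)) 2
      set I : ℝ := inner ℝ u (w - x) with hIdef
      set M : ℝ := ‖w - x‖^2 with hMdef
      set τ : ℝ := min 1 (I / M) with hτdef
      have hτ0 : 0 < τ := lt_min one_pos (div_pos hcon hM)
      have hτ1 : τ ≤ 1 := min_le_left _ _
      have hτM : τ * M ≤ I := by
        rcases le_total (I / M) 1 with h | h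
        · have ht : τ = I / M := min_eq_right h
          rw [ht, div_mul_cancel₀ _ (ne_of_gt hM)]
        · have ht : τ = 1 := min_eq_left h
          have h2 : 1 * M ≤ I := (le_div_iff₀ hM).mp h
          rw [ht]; linarith
      have hzK : x + τ • (w - x) ∈ K :=
        (convex_convexHull ℝ Qs).add_smul_sub_mem hxK hwK ⟨le_of_lt hτ0, hτ1⟩
      have hdist2 : dist pstar (x + τ • (w - x)) ^ 2 = ε^2 - 2*τ*I + τ^2 * M := by
        rw [dist_eq_norm]
        have hps : pstar - (x + τ • (w - x)) = u - τ • (w - x) := by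
          rw [hudef]; abel
        rw [hps, norm_sub_sq_real, real_inner_smul_right, norm_smul, hu]
        rw [mul_pow, hMdef]
        have : |τ| = τ := abs_of_pos hτ0
        rw [Real.norm_eq_abs, this]
        ring
      have hge : ε ≤ dist pstar (x + τ • (w - x)) := by
        rw [← hpd]
        exact Metric.infDist_le_dist_of_mem hzK
      nlinarith [hge, hεpos, mul_pos hτ0 hcon, mul_le_mul_of_nonneg_left hτM (le_of_lt hτ0)]
    -- eta function
    set η : Pt → ℝ := fun v => (inner ℝ u (v - x) : ℝ) with hηdef
    have hηQs : ∀ v ∈ Qs, η v ≤ 0 := fun v hv => hproj v (subset_convexHull ℝ Qs hv)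
    set L := {v ∈ Qs | η v = 0} with hLdef
    have hLQs : L ⊆ Qs := fun v hv => hv.1
    have hlinu : IsLinearMap ℝ (fun z : Pt => (inner ℝ u z : ℝ)) :=
      ⟨fun a b => inner_add_right u a b, fun c a => real_inner_smul_right u a c⟩
    have hxL : x ∈ convexHull ℝ L := by
      set f : Pt →ₗ[ℝ] ℝ := IsLinearMap.mk' _ hlinu with hfdef
      have hface := face_lemma hQsfin f ((inner ℝ u x : ℝ))
        (fun v hv => by
          have h := hηQs v hv
          simp only [hηdef, inner_sub_right] at h
          simp only [hfdef, IsLinearMap.mk'_apply]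
          linarith)
        (z := x) hxK
        (by simp only [hfdef, IsLinearMap.mk'_apply])
      have hLeq : Qs ∩ {y | f y = (inner ℝ u x : ℝ)} = L := by
        ext v
        simp only [hLdef, mem_inter_iff, mem_setOf_eq, mem_sep_iff, hfdef,
          IsLinearMap.mk'_apply, hηdef, inner_sub_right]
        constructor
        · rintro ⟨h1, h2⟩; exact ⟨h1, by linarith⟩
        · rintro ⟨h1, h2⟩; exact ⟨h1, by linarith⟩
      rwa [hLeq] at hface
    have hLne : L.Nonempty := by
      by_contra hcon
      rw [not_nonempty_iff_eq_empty] at hcon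
      rw [hcon, convexHull_empty] at hxL
      exact hxL
    -- elements of L minus x are orthogonal to u ;
    have hLdet : ∀ v ∈ L, ∀ w ∈ L, detv (v - x) (w - x) = 0 := by
      intro v hv w hw
      have h := jacobi (v - x) u (w - x) u
      have h1 : (inner ℝ (v - x) u : ℝ) = 0 := by rw [real_inner_comm]; exact hv.2
      have h2 : (inner ℝ (w - x) u : ℝ) = 0 := by rw [real_inner_comm]; exact hw.2
      rw [h1, h2, huu] at h
      rw [mul_zero, mul_zero, add_zero] at h
      exact (mul_eq_zero.mp h).resolve_right (ne_of_gt (pow_pos hεpos 2))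
    -- pair selection
    have hLpairdet : ∀ v ∈ L, ∀ w ∈ L, detv (w - v) (u) = detv (w - x) u - detv (v - x) u ∨ True := fun _ _ _ _ => Or.inr trivial
    -- case on L
    by_cases hL2 : ∃ A₀ ∈ L, ∃ B₀ ∈ L, A₀ ≠ B₀
    · -- EDGE CASE
      obtain ⟨a, haL, b, hbL, hab⟩ := hL2
      have hLsub : L ⊆ {a, b} := by
        intro v hv
        by_contra hcon
        simp only [mem_insert_iff, mem_singleton_iff] at hcon
        push_neg at hcon
        have hd : detv (b - a) (v - a) = 0 := by
          have h1 := hLdet a haL b hbL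
          have h2 := hLdet a haL v hv
          have hba : b - a = (b - x) - (a - x) := by abel
          have hva : v - a = (v - x) - (a - x) := by abel
          rw [hba, hva]
          have e1 := hLdet v hv b hbL
          have e2 := hLdet v hv a haL
          have e3 := hLdet a haL v hv
          have e4 := hLdet b hbL a haL
          have e5 := hLdet b hbL v hv
          simp only [detv, PiLp.sub_apply] at h1 h2 e1 e2 e3 e4 e5 ⊢
          nlinarith [h1, h2, e1, e2, e3, e4, e5]
        exact hgen a (hQsP (hLQs haL)) b (hQsP (hLQs hbL)) v (hQsP (hLQs hv))
          hab (Ne.symm hcon.1) (Ne.symm hcon.2) (coll_of_detv hd)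
      have hxseg : x ∈ segment ℝ a b := by
        rw [← convexHull_pair]
        exact convexHull_mono hLsub hxL
      have hbau : (inner ℝ (b - a) u : ℝ) = 0 := by
        have h1 : (inner ℝ u (b - x) : ℝ) = 0 := hbL.2
        have h2 : (inner ℝ u (a - x) : ℝ) = 0 := haL.2
        have hba : b - a = (b - x) - (a - x) := by abel
        rw [real_inner_comm, hba, inner_sub_right, h1, h2]
        ring
      have hdetba : detv (b - a) u ≠ 0 := by
        intro hcon
        have h := lagrange (b - a) u
        rw [hcon, hbau, hu] at h
        have hba0 : ‖b - a‖ ≠ 0 := norm_ne_zero_iff.mpr (sub_ne_zero.mpr (Ne.symm hab))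
        have : ‖b - a‖^2 * ε^2 = 0 := by linarith [h]
        rcases mul_eq_zero.mp this with h2 | h2
        · exact hba0 (pow_eq_zero_iff (n := 2) (by norm_num) |>.mp h2)
        · exact (ne_of_gt hεpos) (pow_eq_zero_iff (n := 2) (by norm_num) |>.mp h2 ▸ rfl)
      -- choose orientation
      have hmain : ∀ A₁ B₁ : Pt, A₁ ∈ L → B₁ ∈ L → A₁ ≠ B₁ → 0 < detv (B₁ - A₁) u →
          x ∈ segment ℝ A₁ B₁ → ε = wgt P A₁ B₁ := by
        intro A₁ B₁ hA₁ hB₁ hAB₁ hdpos hxseg₁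
        have hA₁Qs : A₁ ∈ Qs := hLQs hA₁
        have hB₁Qs : B₁ ∈ Qs := hLQs hB₁
        have hink : ∀ v : Pt, (inner ℝ (v - A₁) u : ℝ) = η v := by
          intro v
          have hva : v - A₁ = (v - x) - (A₁ - x) := by abel
          have h2 : (inner ℝ u (A₁ - x) : ℝ) = 0 := hA₁.2
          rw [real_inner_comm, hva, inner_sub_right, h2, hηdef]
          ring
        have H1 : ∀ v ∈ Qs, detv (B₁ - A₁) (v - A₁) ≤ 0 := by
          intro v hv
          have hj := jacobi (B₁ - A₁) u (v - A₁) u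
          rw [huu] at hj
          have h2 : (inner ℝ (B₁ - A₁) u : ℝ) = 0 := by
            rw [hink B₁]; exact hB₁.2
          have h3 : (inner ℝ (v - A₁) u : ℝ) = η v := hink v
          rw [h2, h3] at hj
          have h4 := hηQs v hv
          nlinarith [hj, pow_pos hεpos 2, mul_nonneg (le_of_lt hdpos) (neg_nonneg.mpr h4)]
        have hwd : 0 < detv (B₁ - A₁) (pstar - A₁) := by
          have hj := jacobi (B₁ - A₁) u (pstar - A₁) u
          rw [huu] at hj
          have h2 : (inner ℝ (B₁ - A₁) u : ℝ) = 0 := by rw [hink B₁]; exact hB₁.2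
          have h3 : (inner ℝ (pstar - A₁) u : ℝ) = ε^2 := by
            rw [hink pstar, hηdef]
            simp only
            rw [← hudef, huu]
          rw [h2, h3] at hj
          nlinarith [hj, pow_pos hεpos 2, mul_pos hdpos (pow_pos hεpos 2)]
        have hseg : Metric.infDist pstar (segment ℝ A₁ B₁) = ε := by
          apply le_antisymm
          · calc Metric.infDist pstar (segment ℝ A₁ B₁) ≤ dist pstar x :=
                  Metric.infDist_le_dist_of_mem hxseg₁
              _ = ε := hdx
          · rw [← hpd]
            apply Metric.infDist_le_infDist_of_subset _ ⟨A₁, left_mem_segment ℝ _ _⟩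
            rw [← convexHull_pair]
            exact convexHull_mono (by
              rintro z (rfl | rfl)
              exacts [hA₁Qs, hB₁Qs]) 
        apply hfinal A₁ (hQsP hA₁Qs) B₁ (hQsP hB₁Qs) hAB₁
        · intro q hqP hqd
          exact core_lemma P hPfin hgen ε hε0 Qs hQsP hQsne hcostQs exch
            A₁ B₁ hA₁Qs hB₁Qs hAB₁ H1 q hqP hqd
        · exact ⟨pstar, hpP, le_of_lt hwd, hseg⟩
      rcases lt_or_gt_of_ne hdetba with hneg | hpos
      · refine ⟨b, hQsP (hLQs hbL), a, hQsP (hLQs haL), Ne.symm hab, ?_⟩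
        apply hmain b a hbL haL (Ne.symm hab)
        · have hflip : detv (a - b) u = - detv (b - a) u := by
            simp only [detv, PiLp.sub_apply]; ring
          rw [hflip]; linarith
        · rw [segment_symm]; exact hxseg
      · exact ⟨a, hQsP (hLQs haL), b, hQsP (hLQs hbL), hab,
          hmain a b haL hbL hab hpos hxseg⟩
    · -- VERTEX CASE
      obtain ⟨a, haL⟩ := hLne
      push_neg at hL2
      have hLa : L ⊆ {a} := fun v hv => hL2 v hv a haL
      have hxa : x = a := by
        have h1 : x ∈ convexHull ℝ ({a} : Set Pt) := convexHull_mono hLa hxL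
        rwa [convexHull_singleton, mem_singleton_iff] at h1
      have haQs : a ∈ Qs := hLQs haL
      have hda : dist pstar a = ε := by rw [← hxa]; exact hdx
      have hpsa : pstar - a = u := by rw [hudef, hxa]
      have hvert : ∀ v ∈ Qs, v ≠ a → (inner ℝ (v - a) u : ℝ) < 0 := by
        intro v hv hva
        have h1 := hηQs v hv
        rcases lt_or_eq_of_le h1 with h2 | h2
        · rw [real_inner_comm]
          simp only [hηdef, hxa] at h2
          exact h2
        · exfalso
          exact hva (hL2 v ⟨hv, h2⟩ a haL)
      set X := Qs \ {a} with hXdef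
      have hXfin : X.Finite := hQsfin.subset diff_subset
      have hXne : X.Nonempty := by
        obtain ⟨A₀, hA₀, B₀, hB₀, hAB₀⟩ := hQs2
        by_cases h : A₀ = a
        · exact ⟨B₀, hB₀, by rw [← h]; exact Ne.symm hAB₀⟩
        · exact ⟨A₀, hA₀, h⟩
      have hhh : ∀ v ∈ X, (inner ℝ (v - a) u : ℝ) < 0 := fun v hv => hvert v hv.1 hv.2
      have hgenX : ∀ v ∈ X, ∀ w ∈ X, v ≠ w → detv (v - a) (w - a) ≠ 0 := by
        intro v hv w hw hvw hdet
        exact hgen a (hQsP haQs) v (hQsP hv.1) w (hQsP hw.1)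
          (Ne.symm hv.2) (Ne.symm hw.2) hvw (coll_of_detv hdet)
      obtain ⟨r, hrX, hr⟩ := tangent_r hXfin hXne hhh hgenX
      obtain ⟨l, hlX, hl⟩ := tangent_l hXfin hXne hhh hgenX
      have hsegsub : ∀ A₁ ∈ Qs, ∀ B₁ ∈ Qs, segment ℝ A₁ B₁ ⊆ K := by
        intro A₁ h1 B₁ h2
        rw [← convexHull_pair]
        exact convexHull_mono (by rintro z (rfl | rfl); exacts [h1, h2])
      by_cases hζr : 0 ≤ detv (r - a) u
      · -- pair (a, r)
        have H1 : ∀ v ∈ Qs, detv (r - a) (v - a) ≤ 0 := by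
          intro v hv
          by_cases hva : v = a
          · rw [hva, sub_self, detv_zero_right]
          by_cases hvr : v = r
          · rw [hvr, detv_self]
          · exact le_of_lt (hr v ⟨hv, hva⟩ hvr)
        have hseg : Metric.infDist pstar (segment ℝ a r) = ε := by
          apply le_antisymm
          · calc Metric.infDist pstar (segment ℝ a r) ≤ dist pstar a :=
                  Metric.infDist_le_dist_of_mem (left_mem_segment ℝ _ _)
              _ = ε := hda
          · rw [← hpd]
            exact Metric.infDist_le_infDist_of_subset (hsegsub a haQs r hrX.1)
              ⟨a, left_mem_segment ℝ _ _⟩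
        refine ⟨a, hQsP haQs, r, hQsP hrX.1, Ne.symm hrX.2, ?_⟩
        apply hfinal a (hQsP haQs) r (hQsP hrX.1) (Ne.symm hrX.2)
        · intro q hqP hqd
          exact core_lemma P hPfin hgen ε hε0 Qs hQsP hQsne hcostQs exch
            a r haQs hrX.1 (Ne.symm hrX.2) H1 q hqP hqd
        · exact ⟨pstar, hpP, by rw [hpsa]; exact hζr, hseg⟩
      · push_neg at hζr
        by_cases hζl : detv (l - a) u ≤ 0
        · -- pair (l, a)
          have hsplit : ∀ v : Pt, detv (a - l) (v - l) = - detv (l - a) (v - a) := by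
            intro v; simp only [detv, PiLp.sub_apply]; ring
          have H1 : ∀ v ∈ Qs, detv (a - l) (v - l) ≤ 0 := by
            intro v hv
            rw [hsplit]
            by_cases hva : v = a
            · rw [hva, sub_self, detv_zero_right]; simp
            by_cases hvl : v = l
            · rw [hvl, detv_self]; simp
            · have := hl v ⟨hv, hva⟩ hvl
              linarith
          have hseg : Metric.infDist pstar (segment ℝ l a) = ε := by
            apply le_antisymm
            · calc Metric.infDist pstar (segment ℝ l a) ≤ dist pstar a :=
                    Metric.infDist_le_dist_of_mem (right_mem_segment ℝ _ _)
                _ = ε := hda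
            · rw [← hpd]
              exact Metric.infDist_le_infDist_of_subset (hsegsub l hlX.1 a haQs)
                ⟨a, right_mem_segment ℝ _ _⟩
          refine ⟨l, hQsP hlX.1, a, hQsP haQs, hlX.2, ?_⟩
          apply hfinal l (hQsP hlX.1) a (hQsP haQs) hlX.2
          · intro q hqP hqd
            exact core_lemma P hPfin hgen ε hε0 Qs hQsP hQsne hcostQs exch
              l a hlX.1 haQs hlX.2 H1 q hqP hqd
          · refine ⟨pstar, hpP, ?_, hseg⟩
            rw [hsplit, hpsa]
            linarith
        · -- impossible
          exfalso
          push_neg at hζl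
          have hlr : l ≠ r := by
            intro h
            rw [h] at hζl
            linarith
          have h1 : 0 < detv (l - a) (r - a) := hl r hrX (Ne.symm hlr)
          have hj := jacobi (l - a) u (r - a) u
          rw [huu] at hj
          have h2 : (inner ℝ (r - a) u : ℝ) < 0 := hvert r hrX.1 hrX.2
          have h3 : (inner ℝ (l - a) u : ℝ) < 0 := hvert l hlX.1 hlX.2
          have h4 : detv u (r - a) = - detv (r - a) u := by
            simp only [detv, PiLp.sub_apply]; ring
          rw [h4] at hj
          nlinarith [hj, pow_pos hεpos 2, mul_pos h1 (pow_pos hεpos 2),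
            mul_pos hζl (neg_pos.mpr h2), mul_pos (neg_pos.mpr hζr) (neg_pos.mpr h3)]
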